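/- arXiv:2109.04952 — 2 statements merged into one kernel-verified Lean document; each statement's English description precedes it below -/
import Mathlib

section
/- Let n ≥ 3 and 1 ≤ k ≤ n−2 be integers and let p > n−k be real. Set β = (p+k−n)/(p−1) and suppose 0 < λ < χ̆(p,n,k) := min( (p+k−n)(k+p−2)/((p−1)(2p−n+k−2)), k/(p−1) ). Define û(x) = |x''|^β · |x|^{−(λ+β)} for x ∈ ℝⁿ with x'' ≠ 0. Then û is a p-supersolution on ℝⁿ ∖ ℝᵏ: for every x with x'' ≠ 0 one has ∑_{i=1}^n ∂/∂x_i ( ‖∇û(x)‖^{p−2} · ∂û/∂x_i(x) ) ≤ 0. -/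
open scoped RealInnerProductSpace
open Real MeasureTheory

noncomputable section

/-- The divergence of a vector field on `ℝⁿ`, i.e. the trace of its Jacobian. -/
def vdiv {n : ℕ} (V : EuclideanSpace ℝ (Fin n) → EuclideanSpace ℝ (Fin n))
    (x : EuclideanSpace ℝ (Fin n)) : ℝ :=
  LinearMap.trace ℝ (EuclideanSpace ℝ (Fin n)) (fderiv ℝ V x).toLinearMap

/-- `|x''|`: the norm of the last `n - k` coordinates of `x`. -/
def normPerp (n k : ℕ) (x : EuclideanSpace ℝ (Fin n)) : ℝ :=
  Real.sqrt (∑ i : Fin n, if k ≤ (i : ℕ) then x i ^ 2 else 0)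

/-- The pointwise `p`-Laplacian `∇ · (‖∇u‖^{p-2} ∇u)`. -/
def pLap (p : ℝ) {n : ℕ} (u : EuclideanSpace ℝ (Fin n) → ℝ)
    (x : EuclideanSpace ℝ (Fin n)) : ℝ :=
  vdiv (fun y => ‖gradient u y‖ ^ (p - 2) • gradient u y) x

namespace Stmt1Aux

variable {n k : ℕ}

def S (n k : ℕ) (y : EuclideanSpace ℝ (Fin n)) : ℝ :=
  ∑ i : Fin n, if k ≤ (i : ℕ) then y i ^ 2 else 0
def Q (n : ℕ) (y : EuclideanSpace ℝ (Fin n)) : ℝ := ∑ i : Fin n, y i ^ 2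

def Pl (n k : ℕ) : EuclideanSpace ℝ (Fin n) →ₗ[ℝ] EuclideanSpace ℝ (Fin n) where
  toFun y := WithLp.toLp 2 (fun i : Fin n => if k ≤ (i : ℕ) then y i else 0)
  map_add' y z := by ext i; by_cases h : k ≤ (i : ℕ) <;> simp [h]
  map_smul' c y := by ext i; by_cases h : k ≤ (i : ℕ) <;> simp [h]

def Pc (n k : ℕ) : EuclideanSpace ℝ (Fin n) →L[ℝ] EuclideanSpace ℝ (Fin n) :=
  LinearMap.toContinuousLinearMap (Pl n k)

@[simp] lemma Pc_apply (y : EuclideanSpace ℝ (Fin n)) (i : Fin n) :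
    Pc n k y i = if k ≤ (i : ℕ) then y i else 0 := rfl

lemma inner_Pc_left (y z : EuclideanSpace ℝ (Fin n)) :
    ⟪Pc n k y, z⟫ = ∑ i : Fin n, if k ≤ (i : ℕ) then y i * z i else 0 := by
  rw [PiLp.inner_apply]
  refine Finset.sum_congr rfl fun i _ => ?_
  by_cases h : k ≤ (i : ℕ) <;> simp [h, RCLike.inner_apply, mul_comm]

lemma inner_Pc_Pc (y : EuclideanSpace ℝ (Fin n)) : ⟪Pc n k y, Pc n k y⟫ = S n k y := by
  rw [inner_Pc_left, S]
  refine Finset.sum_congr rfl fun i _ => ?_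
  by_cases h : k ≤ (i : ℕ) <;> simp [h, sq]

lemma inner_Pc_self (y : EuclideanSpace ℝ (Fin n)) : ⟪Pc n k y, y⟫ = S n k y := by
  rw [inner_Pc_left, S]
  refine Finset.sum_congr rfl fun i _ => ?_
  by_cases h : k ≤ (i : ℕ) <;> simp [h, sq]

lemma inner_self_Pc (y : EuclideanSpace ℝ (Fin n)) : ⟪y, Pc n k y⟫ = S n k y := by
  rw [real_inner_comm, inner_Pc_self]

lemma inner_self_Q (y : EuclideanSpace ℝ (Fin n)) : ⟪y, y⟫ = Q n y := by
  rw [PiLp.inner_apply, Q]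
  refine Finset.sum_congr rfl fun i _ => ?_
  simp [sq, RCLike.inner_apply]

lemma S_nonneg (y : EuclideanSpace ℝ (Fin n)) : 0 ≤ S n k y := by
  refine Finset.sum_nonneg fun i _ => ?_
  by_cases h : k ≤ (i : ℕ) <;> simp [h]; positivity

lemma S_le_Q (y : EuclideanSpace ℝ (Fin n)) : S n k y ≤ Q n y := by
  refine Finset.sum_le_sum fun i _ => ?_
  by_cases h : k ≤ (i : ℕ) <;> simp [h]; positivity

lemma Q_pos (y : EuclideanSpace ℝ (Fin n)) (h : 0 < S n k y) : 0 < Q n y :=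
  lt_of_lt_of_le h (S_le_Q y)

lemma normPerp_eq (y : EuclideanSpace ℝ (Fin n)) : normPerp n k y = Real.sqrt (S n k y) := rfl

lemma norm_eq_sqrt_Q (y : EuclideanSpace ℝ (Fin n)) : ‖y‖ = Real.sqrt (Q n y) := by
  rw [EuclideanSpace.norm_eq, Q]
  congr 1
  exact Finset.sum_congr rfl fun i _ => by rw [Real.norm_eq_abs, sq_abs]

lemma continuous_S : Continuous (S n k) := by
  refine continuous_finset_sum _ fun i _ => ?_
  by_cases h : k ≤ (i : ℕ) <;> simp [h]
  · exact (EuclideanSpace.proj i : EuclideanSpace ℝ (Fin n) →L[ℝ] ℝ).continuous.pow 2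
  · exact continuous_const


lemma hasFDerivAt_sq (i : Fin n) (x : EuclideanSpace ℝ (Fin n)) :
    HasFDerivAt (fun y : EuclideanSpace ℝ (Fin n) => y i ^ 2)
      ((2 * x i) • (EuclideanSpace.proj i : EuclideanSpace ℝ (Fin n) →L[ℝ] ℝ)) x := by
  have hp : HasFDerivAt (fun y : EuclideanSpace ℝ (Fin n) => y i)
      (EuclideanSpace.proj i : EuclideanSpace ℝ (Fin n) →L[ℝ] ℝ) x :=
    (EuclideanSpace.proj i : EuclideanSpace ℝ (Fin n) →L[ℝ] ℝ).hasFDerivAt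
  have h := hp.mul hp
  have he : (fun y : EuclideanSpace ℝ (Fin n) => y i ^ 2) = fun y => y i * y i := by
    funext y; ring
  rw [he]
  refine h.congr_fderiv ?_
  symm
  ext v; simp; ring

/-- derivative of `S` -/
lemma hasFDerivAt_S (x : EuclideanSpace ℝ (Fin n)) :
    HasFDerivAt (S n k) (innerSL ℝ ((2:ℝ) • Pc n k x)) x := by
  classical
  have h : HasFDerivAt (fun y => ∑ i : Fin n, if k ≤ (i : ℕ) then y i ^ 2 else 0)
      (∑ i : Fin n, if k ≤ (i : ℕ)
        then (2 * x i) • (EuclideanSpace.proj i : EuclideanSpace ℝ (Fin n) →L[ℝ] ℝ)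
        else 0) x := by
    apply HasFDerivAt.fun_sum
    intro i _
    by_cases hik : k ≤ (i : ℕ)
    · simpa [hik] using hasFDerivAt_sq i x
    · simpa [hik] using hasFDerivAt_const (0:ℝ) x
  refine h.congr_fderiv ?_
  symm
  ext v
  rw [ContinuousLinearMap.sum_apply]
  have := inner_Pc_left (n := n) (k := k) ((2:ℝ) • x) v
  rw [show innerSL ℝ ((2:ℝ) • Pc n k x) v = ⟪(2:ℝ) • Pc n k x, v⟫ from rfl,
    real_inner_smul_left, inner_Pc_left, Finset.mul_sum]
  refine Finset.sum_congr rfl fun i _ => ?_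
  by_cases hik : k ≤ (i : ℕ) <;> simp [hik] <;> ring

/-- derivative of `Q` -/
lemma hasFDerivAt_Q (x : EuclideanSpace ℝ (Fin n)) :
    HasFDerivAt (Q n) (innerSL ℝ ((2:ℝ) • x)) x := by
  classical
  have h : HasFDerivAt (fun y => ∑ i : Fin n, y i ^ 2)
      (∑ i : Fin n, (2 * x i) • (EuclideanSpace.proj i : EuclideanSpace ℝ (Fin n) →L[ℝ] ℝ)) x :=
    HasFDerivAt.fun_sum fun i _ => hasFDerivAt_sq i x
  refine h.congr_fderiv ?_
  symm
  ext v
  rw [ContinuousLinearMap.sum_apply]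
  rw [show innerSL ℝ ((2:ℝ) • x) v = ⟪(2:ℝ) • x, v⟫ from rfl]
  rw [PiLp.inner_apply]
  refine Finset.sum_congr rfl fun i _ => ?_
  simp [RCLike.inner_apply, PiLp.smul_apply]
  try ring

/-- trace of a CLM on Euclidean space as a sum of diagonal entries -/
lemma trace_clm (L : EuclideanSpace ℝ (Fin n) →L[ℝ] EuclideanSpace ℝ (Fin n)) :
    LinearMap.trace ℝ (EuclideanSpace ℝ (Fin n)) L.toLinearMap
      = ∑ i : Fin n, L (EuclideanSpace.single i 1) i := by
  classical
  rw [LinearMap.trace_eq_matrix_trace ℝ (EuclideanSpace.basisFun (Fin n) ℝ).toBasis]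
  rw [Matrix.trace]
  refine Finset.sum_congr rfl fun i _ => ?_
  rw [Matrix.diag_apply, LinearMap.toMatrix_apply]
  simp [EuclideanSpace.basisFun_apply, EuclideanSpace.basisFun_repr]

lemma sum_single_eq (w : EuclideanSpace ℝ (Fin n)) :
    ∑ i : Fin n, w i • EuclideanSpace.single i (1:ℝ) = w := by
  have := (EuclideanSpace.basisFun (Fin n) ℝ).sum_repr w
  simpa [EuclideanSpace.basisFun_apply, EuclideanSpace.basisFun_repr] using this

lemma trace_smulRight (d : EuclideanSpace ℝ (Fin n) →L[ℝ] ℝ) (w : EuclideanSpace ℝ (Fin n)) :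
    LinearMap.trace ℝ (EuclideanSpace ℝ (Fin n)) (d.smulRight w).toLinearMap = d w := by
  classical
  rw [trace_clm]
  have : ∀ i : Fin n, (d.smulRight w) (EuclideanSpace.single i 1) i
      = d (EuclideanSpace.single i 1) * w i := by
    intro i; simp [ContinuousLinearMap.smulRight_apply]
  rw [Finset.sum_congr rfl fun i _ => this i]
  conv_rhs => rw [← sum_single_eq w]
  rw [map_sum]
  refine Finset.sum_congr rfl fun i _ => ?_
  rw [ContinuousLinearMap.map_smul]
  simp [mul_comm]

lemma trace_Pc (hkn : k < n) :
    LinearMap.trace ℝ (EuclideanSpace ℝ (Fin n)) (Pc n k).toLinearMap = (n : ℝ) - k := by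
  classical
  rw [trace_clm]
  have : ∀ i : Fin n, (Pc n k) (EuclideanSpace.single i 1) i
      = if k ≤ (i : ℕ) then (1:ℝ) else 0 := by
    intro i
    by_cases hik : k ≤ (i : ℕ) <;> simp [hik, EuclideanSpace.single_apply]
  rw [Finset.sum_congr rfl fun i _ => this i]
  rw [Finset.sum_boole]
  have hcard : (Finset.univ.filter fun i : Fin n => k ≤ (i : ℕ)).card = n - k := by
    have h1 : (Finset.univ.filter fun i : Fin n => k ≤ (i : ℕ))
        = (Finset.univ.filter fun i : Fin n => ¬ ((i : ℕ) < k)) := by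
      refine Finset.filter_congr fun i _ => ?_
      simp [not_lt]
    have h2 : (Finset.univ.filter fun i : Fin n => (i : ℕ) < k) = Finset.Iio ⟨k, hkn⟩ := by
      ext i
      simp [Finset.mem_Iio, Fin.lt_def]
    rw [h1, Finset.filter_not, Finset.card_sdiff_of_subset (Finset.filter_subset _ _), h2, Fin.card_Iio]
    simp
  rw [hcard]
  push_cast [Nat.cast_sub hkn.le]
  ring

lemma trace_id' :
    LinearMap.trace ℝ (EuclideanSpace ℝ (Fin n)) (ContinuousLinearMap.id ℝ _).toLinearMap
      = (n : ℝ) := by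
  rw [show (ContinuousLinearMap.id ℝ (EuclideanSpace ℝ (Fin n))).toLinearMap = LinearMap.id from rfl]
  rw [LinearMap.trace_id]
  simp


/-- gradient of `y ↦ S y ^ e₁ * Q y ^ e₂` at a point where `S, Q > 0`. -/
lemma hasGradientAt_SQ (e₁ e₂ : ℝ) (x : EuclideanSpace ℝ (Fin n))
    (hS : 0 < S n k x) (hQ : 0 < Q n x) :
    HasGradientAt (fun y => S n k y ^ e₁ * Q n y ^ e₂)
      ((2 * e₁ * S n k x ^ (e₁ - 1) * Q n x ^ e₂) • Pc n k x
        + (2 * e₂ * S n k x ^ e₁ * Q n x ^ (e₂ - 1)) • x) x := by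
  have hS' := (hasFDerivAt_S (k := k) x).rpow_const (p := e₁) (Or.inl hS.ne')
  have hQ' := (hasFDerivAt_Q x).rpow_const (p := e₂) (Or.inl hQ.ne')
  have hm := hS'.mul hQ'
  rw [hasGradientAt_iff_hasFDerivAt]
  refine hm.congr_fderiv ?_
  symm
  ext v
  simp only [InnerProductSpace.toDual_apply_apply, ContinuousLinearMap.add_apply,
    ContinuousLinearMap.coe_smul', Pi.smul_apply, smul_eq_mul,
    innerSL_apply_apply]
  rw [inner_add_left, real_inner_smul_left, real_inner_smul_left]
  rw [real_inner_smul_left x v 2, real_inner_smul_left (Pc n k x) v 2]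
  ring

/-- derivative of `y ↦ C * (S^e₁ * (Q^e₂ * (θq*Q + θs*S)^e₃))`. -/
lemma hasFDerivAt_SQH (C e₁ e₂ e₃ θs θq : ℝ) (x : EuclideanSpace ℝ (Fin n))
    (hS : 0 < S n k x) (hQ : 0 < Q n x) (hH : 0 < θq * Q n x + θs * S n k x) :
    HasFDerivAt (fun y => C * (S n k y ^ e₁ * (Q n y ^ e₂ * (θq * Q n y + θs * S n k y) ^ e₃)))
      ((C * (e₁ * S n k x ^ (e₁ - 1) * Q n x ^ e₂ * (θq * Q n x + θs * S n k x) ^ e₃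
          + S n k x ^ e₁ * Q n x ^ e₂ * (e₃ * (θq * Q n x + θs * S n k x) ^ (e₃ - 1)) * θs))
          • innerSL ℝ ((2:ℝ) • Pc n k x)
        + (C * (e₂ * S n k x ^ e₁ * Q n x ^ (e₂ - 1) * (θq * Q n x + θs * S n k x) ^ e₃
          + S n k x ^ e₁ * Q n x ^ e₂ * (e₃ * (θq * Q n x + θs * S n k x) ^ (e₃ - 1)) * θq))
          • innerSL ℝ ((2:ℝ) • x)) x := by
  have hS' := (hasFDerivAt_S (k := k) x).rpow_const (p := e₁) (Or.inl hS.ne')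
  have hQ' := (hasFDerivAt_Q x).rpow_const (p := e₂) (Or.inl hQ.ne')
  have hHlin : HasFDerivAt (fun y => θq * Q n y + θs * S n k y)
      (θq • innerSL ℝ ((2:ℝ) • x) + θs • innerSL ℝ ((2:ℝ) • Pc n k x)) x :=
    ((hasFDerivAt_Q x).const_mul θq).add ((hasFDerivAt_S (k := k) x).const_mul θs)
  have hH' := hHlin.rpow_const (p := e₃) (Or.inl hH.ne')
  have hm := ((hS'.mul (hQ'.mul hH')).const_mul C)
  refine hm.congr_fderiv ?_
  symm
  ext v
  simp only [ContinuousLinearMap.add_apply, ContinuousLinearMap.coe_smul', Pi.smul_apply,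
    smul_eq_mul, Pi.mul_apply]
  ring


lemma Q_nonneg (y : EuclideanSpace ℝ (Fin n)) : 0 ≤ Q n y :=
  Finset.sum_nonneg fun i _ => by positivity

/-- the field `‖∇u‖^{p-2} ∇u` in explicit form, at points where `S > 0`. -/
lemma V_eq (β α p : ℝ) (y : EuclideanSpace ℝ (Fin n)) (hS : 0 < S n k y)
    (hH : 0 < β^2 * Q n y + (α^2 - 2*α*β) * S n k y) :
    ‖gradient (fun z => S n k z ^ (β/2) * Q n z ^ (-(α/2))) y‖ ^ (p - 2) •
      gradient (fun z => S n k z ^ (β/2) * Q n z ^ (-(α/2))) y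
    = (β * (S n k y ^ ((β-1)*((p-2)/2) + (β/2 - 1)) *
        (Q n y ^ ((-α-1)*((p-2)/2) + (-(α/2))) *
         (β^2 * Q n y + (α^2 - 2*α*β) * S n k y) ^ ((p-2)/2)))) • Pc n k y
      + ((-α) * (S n k y ^ ((β-1)*((p-2)/2) + β/2) *
        (Q n y ^ ((-α-1)*((p-2)/2) + (-(α/2) - 1)) *
         (β^2 * Q n y + (α^2 - 2*α*β) * S n k y) ^ ((p-2)/2)))) • y := by
  have hQ : 0 < Q n y := Q_pos y hS
  have hg := (hasGradientAt_SQ (β/2) (-(α/2)) y hS hQ).gradient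
  rw [hg]
  set s := S n k y with hs_def
  set q := Q n y with hq_def
  have mS : ∀ a b : ℝ, s ^ a * s ^ b = s ^ (a+b) := fun a b => (Real.rpow_add hS a b).symm
  have mQ : ∀ a b : ℝ, q ^ a * q ^ b = q ^ (a+b) := fun a b => (Real.rpow_add hQ a b).symm
  set c1 : ℝ := 2 * (β/2) * s ^ (β/2 - 1) * q ^ (-(α/2)) with hc1
  set c2 : ℝ := 2 * (-(α/2)) * s ^ (β/2) * q ^ (-(α/2) - 1) with hc2
  set H : ℝ := β^2 * q + (α^2 - 2*α*β) * s with hH_def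
  -- squared norm of the gradient
  have hGsq : ‖c1 • Pc n k y + c2 • y‖^2 = c1*c1*s + 2*(c1*c2)*s + c2*c2*q := by
    rw [← real_inner_self_eq_norm_sq]
    simp only [inner_add_left, inner_add_right, real_inner_smul_left, real_inner_smul_right]
    rw [inner_Pc_Pc, inner_Pc_self, inner_self_Pc, inner_self_Q]
    ring
  -- power expansion identities
  have e1 : s ^ (β/2) = s ^ (β/2 - 1) * s := by
    have h := Real.rpow_add_one hS.ne' (β/2 - 1)
    rw [sub_add_cancel] at h
    rw [h]
  have e2 : q ^ (-(α/2)) = q ^ (-(α/2) - 1) * q := by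
    have h := Real.rpow_add_one hQ.ne' (-(α/2) - 1)
    rw [sub_add_cancel] at h
    rw [h]
  have e3 : s ^ (β - 1) = s ^ (β/2 - 1) * (s ^ (β/2 - 1) * s) := by
    rw [show β - 1 = (β/2-1) + ((β/2-1)+1) by ring, Real.rpow_add hS,
      Real.rpow_add_one hS.ne']
  have e4 : q ^ (-α - 1) = q ^ (-(α/2) - 1) * (q ^ (-(α/2) - 1) * q) := by
    rw [show -α - 1 = (-(α/2)-1) + ((-(α/2)-1)+1) by ring, Real.rpow_add hQ,
      Real.rpow_add_one hQ.ne']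
  have hN2 : ‖c1 • Pc n k y + c2 • y‖^2 = s ^ (β-1) * (q ^ (-α-1) * H) := by
    rw [hGsq, hc1, hc2, hH_def, e1, e2, e3, e4]
    ring
  have hN2pos : 0 < s ^ (β-1) * (q ^ (-α-1) * H) := by
    have := Real.rpow_pos_of_pos hS (β-1)
    have := Real.rpow_pos_of_pos hQ (-α-1)
    positivity
  have hnorm : ‖c1 • Pc n k y + c2 • y‖ = (s ^ (β-1) * (q ^ (-α-1) * H)) ^ ((1:ℝ)/2) := by
    rw [← Real.sqrt_eq_rpow]
    rw [show ‖c1 • Pc n k y + c2 • y‖ = Real.sqrt (‖c1 • Pc n k y + c2 • y‖^2) from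
      (Real.sqrt_sq (norm_nonneg _)).symm]
    rw [hN2]
  have hpow : ‖c1 • Pc n k y + c2 • y‖ ^ (p-2)
      = s ^ ((β-1)*((p-2)/2)) * (q ^ ((-α-1)*((p-2)/2)) * H ^ ((p-2)/2)) := by
    rw [hnorm, ← Real.rpow_mul hN2pos.le]
    rw [show (1:ℝ)/2 * (p-2) = (p-2)/2 by ring]
    rw [Real.mul_rpow (Real.rpow_pos_of_pos hS _).le
      (mul_nonneg (Real.rpow_pos_of_pos hQ _).le (le_of_lt (by positivity)))]
    rw [Real.mul_rpow (Real.rpow_pos_of_pos hQ _).le (le_of_lt (by positivity))]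
    rw [← Real.rpow_mul hS.le, ← Real.rpow_mul hQ.le]
  rw [smul_add, smul_smul, smul_smul, hpow]
  congr 1
  · congr 1
    rw [hc1]
    rw [show s ^ ((β-1)*((p-2)/2) + (β/2 - 1)) = s ^ ((β-1)*((p-2)/2)) * s ^ (β/2 - 1) from
      (mS _ _).symm]
    rw [show q ^ ((-α-1)*((p-2)/2) + (-(α/2))) = q ^ ((-α-1)*((p-2)/2)) * q ^ (-(α/2)) from
      (mQ _ _).symm]
    ring
  · congr 1
    rw [hc2]
    rw [show s ^ ((β-1)*((p-2)/2) + β/2) = s ^ ((β-1)*((p-2)/2)) * s ^ (β/2) from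
      (mS _ _).symm]
    rw [show q ^ ((-α-1)*((p-2)/2) + (-(α/2) - 1)) = q ^ ((-α-1)*((p-2)/2)) * q ^ (-(α/2) - 1) from
      (mQ _ _).symm]
    ring

end Stmt1Aux

open Stmt1Aux in
set_option maxHeartbeats 4000000 in
/-- STATEMENT 0: for `0 < λ < χ̆(p,n,k)`, the function `û(x) = |x''|^β |x|^{-(λ+β)}` is a
`p`-supersolution on `ℝⁿ ∖ ℝᵏ`. -/
theorem stmt1 (n k : ℕ) (hn : 3 ≤ n) (hk : 1 ≤ k) (hkn : k + 2 ≤ n)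
    (p : ℝ) (hp : (n : ℝ) - k < p)
    (β lam : ℝ) (hβ : β = (p + k - n) / (p - 1))
    (hlam0 : 0 < lam)
    (hlam : lam < min ((p + (k : ℝ) - n) * ((k : ℝ) + p - 2) /
        ((p - 1) * (2 * p - n + k - 2))) ((k : ℝ) / (p - 1)))
    (uhat : EuclideanSpace ℝ (Fin n) → ℝ)
    (huhat : ∀ x, uhat x = normPerp n k x ^ β * ‖x‖ ^ (-(lam + β))) :
    ∀ x : EuclideanSpace ℝ (Fin n), normPerp n k x ≠ 0 → pLap p uhat x ≤ 0 := by
  intro x hx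
  classical
  have hSx : 0 < S n k x := by
    have hxx : normPerp n k x = Real.sqrt (S n k x) := rfl
    rw [hxx] at hx
    exact Real.sqrt_ne_zero'.mp hx
  have hQx : 0 < Q n x := Q_pos x hSx
  have hnk2 : ((k:ℝ)) + 2 ≤ (n:ℝ) := by exact_mod_cast hkn
  have hk1 : (1:ℝ) ≤ (k:ℝ) := by exact_mod_cast hk
  have hp2 : 2 < p := by linarith
  have hp1 : 0 < p - 1 := by linarith
  have hβ' : β * (p - 1) = p + k - n := by rw [hβ]; field_simp
  have hβpos : 0 < β := by nlinarith [hβ']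
  have hβlt1 : β < 1 := by nlinarith [hβ']
  have hα : 0 < lam + β := by linarith
  obtain ⟨hlam1, hlam2⟩ := lt_min_iff.mp hlam
  have hden : 0 < (p - 1) * (2 * p - n + k - 2) := by nlinarith
  have hb1 : lam * ((p - 1) * (2 * p - (n:ℝ) + k - 2)) < (p + k - n) * ((k:ℝ) + p - 2) :=
    (lt_div_iff₀ hden).mp hlam1
  have hb2 : lam * (p - 1) < (k:ℝ) := (lt_div_iff₀ hp1).mp hlam2
  have hu : uhat = fun z => S n k z ^ (β/2) * Q n z ^ (-((lam+β)/2)) := by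
    funext z
    rw [huhat z, normPerp_eq, norm_eq_sqrt_Q, Real.sqrt_eq_rpow,
      Real.sqrt_eq_rpow, ← Real.rpow_mul (S_nonneg z),
      ← Real.rpow_mul (Q_nonneg z)]
    congr 1
    · congr 1
      ring
    · congr 1
      ring
  have hHy : ∀ y : EuclideanSpace ℝ (Fin n), 0 < S n k y →
      0 < β^2 * Q n y + ((lam+β)^2 - 2*(lam+β)*β) * S n k y := by
    intro y hy
    have h1 := S_le_Q (n := n) (k := k) y
    nlinarith [mul_pos (mul_pos hlam0 hlam0) hy,
      mul_nonneg (sq_nonneg β) (sub_nonneg.mpr h1)]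
  have hΨ := hasFDerivAt_SQH (n := n) (k := k) β ((β-1)*((p-2)/2) + (β/2 - 1)) ((-(lam+β)-1)*((p-2)/2) + (-((lam+β)/2))) ((p-2)/2) ((lam+β)^2 - 2*(lam+β)*β) (β^2) x hSx hQx (hHy x hSx)
  have hΧ := hasFDerivAt_SQH (n := n) (k := k) (-(lam+β)) ((β-1)*((p-2)/2) + β/2) ((-(lam+β)-1)*((p-2)/2) + (-((lam+β)/2) - 1)) ((p-2)/2) ((lam+β)^2 - 2*(lam+β)*β) (β^2) x hSx hQx (hHy x hSx)
  have hW : HasFDerivAt (fun y => (β * (S n k y ^ ((β-1)*((p-2)/2) + (β/2 - 1)) * (Q n y ^ ((-(lam+β)-1)*((p-2)/2) + (-((lam+β)/2))) * (β^2 * Q n y + ((lam+β)^2 - 2*(lam+β)*β) * S n k y) ^ ((p-2)/2)))) • Pc n k y + ((-(lam+β)) * (S n k y ^ ((β-1)*((p-2)/2) + β/2) * (Q n y ^ ((-(lam+β)-1)*((p-2)/2) + (-((lam+β)/2) - 1)) * (β^2 * Q n y + ((lam+β)^2 - 2*(lam+β)*β) * S n k y) ^ ((p-2)/2)))) • y)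 (((β * (S n k x ^ ((β-1)*((p-2)/2) + (β/2 - 1)) * (Q n x ^ ((-(lam+β)-1)*((p-2)/2) + (-((lam+β)/2))) * (β^2 * Q n x + ((lam+β)^2 - 2*(lam+β)*β) * S n k x) ^ ((p-2)/2)))) • Pc n k + ContinuousLinearMap.smulRight ((β * (((β-1)*((p-2)/2) + (β/2 - 1)) * S n k x ^ (((β-1)*((p-2)/2) + (β/2 - 1)) - 1) * Q n x ^ ((-(lam+β)-1)*((p-2)/2) + (-((lam+β)/2))) * (β^2 * Q n x + ((lam+β)^2 - 2*(lam+β)*β) * S n k x) ^ ((p-2)/2) + S n k x ^ ((β-1)*((p-2)/2) + (β/2 - 1)) * Q n x ^ ((-(lam+β)-1)*((p-2)/2) + (-((lam+β)/2))) * (((p-2)/2) * (β^2 * Q n x + ((lam+β)^2 - 2*(lam+β)*β) * S n k x) ^ (((p-2)/2) - 1)) * ((lam+β)^2 - 2*(lam+β)*β))) • innerSL ℝ ((2:ℝ) • Pc n k x) + (β * (((-(lam+β)-1)*((p-2)/2) + (-((lam+β)/2))) * S n k x ^ ((β-1)*((p-2)/2) + (β/2 - 1)) * Q n x ^ (((-(lam+β)-1)*((p-2)/2)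 + (-((lam+β)/2))) - 1) * (β^2 * Q n x + ((lam+β)^2 - 2*(lam+β)*β) * S n k x) ^ ((p-2)/2) + S n k x ^ ((β-1)*((p-2)/2) + (β/2 - 1)) * Q n x ^ ((-(lam+β)-1)*((p-2)/2) + (-((lam+β)/2))) * (((p-2)/2) * (β^2 * Q n x + ((lam+β)^2 - 2*(lam+β)*β) * S n k x) ^ (((p-2)/2) - 1)) * β^2)) • innerSL ℝ ((2:ℝ) • x)) (Pc n k x)) + (((-(lam+β)) * (S n k x ^ ((β-1)*((p-2)/2) + β/2) * (Q n x ^ ((-(lam+β)-1)*((p-2)/2) + (-((lam+β)/2) - 1)) * (β^2 * Q n x + ((lam+β)^2 - 2*(lam+β)*β) * S n k x) ^ ((p-2)/2)))) • ContinuousLinearMap.id ℝ (EuclideanSpace ℝ (Fin n)) + ContinuousLinearMap.smulRight (((-(lam+β)) * (((β-1)*((p-2)/2) + β/2) * S n k x ^ (((β-1)*((p-2)/2) + β/2) - 1) * Q n x ^ ((-(lam+β)-1)*((p-2)/2) + (-((lam+β)/2) - 1)) * (β^2 * Q n x + ((lam+β)^2 - 2*(lam+β)*β) * S n k x) ^ ((p-2)/2)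 + S n k x ^ ((β-1)*((p-2)/2) + β/2) * Q n x ^ ((-(lam+β)-1)*((p-2)/2) + (-((lam+β)/2) - 1)) * (((p-2)/2) * (β^2 * Q n x + ((lam+β)^2 - 2*(lam+β)*β) * S n k x) ^ (((p-2)/2) - 1)) * ((lam+β)^2 - 2*(lam+β)*β))) • innerSL ℝ ((2:ℝ) • Pc n k x) + ((-(lam+β)) * (((-(lam+β)-1)*((p-2)/2) + (-((lam+β)/2) - 1)) * S n k x ^ ((β-1)*((p-2)/2) + β/2) * Q n x ^ (((-(lam+β)-1)*((p-2)/2) + (-((lam+β)/2) - 1)) - 1) * (β^2 * Q n x + ((lam+β)^2 - 2*(lam+β)*β) * S n k x) ^ ((p-2)/2) + S n k x ^ ((β-1)*((p-2)/2) + β/2) * Q n x ^ ((-(lam+β)-1)*((p-2)/2) + (-((lam+β)/2) - 1)) * (((p-2)/2) * (β^2 * Q n x + ((lam+β)^2 - 2*(lam+β)*β) * S n k x) ^ (((p-2)/2) - 1)) * β^2)) • innerSL ℝ ((2:ℝ) • x)) x)) x := by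
    exact (hΨ.smul ((Pc n k).hasFDerivAt)).add (hΧ.smul (hasFDerivAt_id x))
  have heq : (fun y => ‖gradient uhat y‖ ^ (p - 2) • gradient uhat y) =ᶠ[nhds x] (fun y => (β * (S n k y ^ ((β-1)*((p-2)/2) + (β/2 - 1)) * (Q n y ^ ((-(lam+β)-1)*((p-2)/2) + (-((lam+β)/2))) * (β^2 * Q n y + ((lam+β)^2 - 2*(lam+β)*β) * S n k y) ^ ((p-2)/2)))) • Pc n k y + ((-(lam+β)) * (S n k y ^ ((β-1)*((p-2)/2) + β/2) * (Q n y ^ ((-(lam+β)-1)*((p-2)/2) + (-((lam+β)/2) - 1)) * (β^2 * Q n y + ((lam+β)^2 - 2*(lam+β)*β) * S n k y) ^ ((p-2)/2)))) • y) := by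
    have hopen : IsOpen {y : EuclideanSpace ℝ (Fin n) | 0 < S n k y} :=
      isOpen_lt continuous_const continuous_S
    filter_upwards [hopen.mem_nhds hSx] with y hy
    rw [hu]
    exact V_eq β (lam+β) p y hy (hHy y hy)
  have hDS_P : (innerSL ℝ (Pc n k x)) (Pc n k x) = S n k x := inner_Pc_Pc x
  have hDQ_P : (innerSL ℝ x) (Pc n k x) = S n k x := inner_self_Pc x
  have hDS_x : (innerSL ℝ (Pc n k x)) x = S n k x := inner_Pc_self x
  have hDQ_x : (innerSL ℝ x) x = Q n x := inner_self_Q x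
  have hkln : k < n := by omega
  have htrace : LinearMap.trace ℝ (EuclideanSpace ℝ (Fin n))
      (fderiv ℝ (fun y => (β * (S n k y ^ ((β-1)*((p-2)/2) + (β/2 - 1)) * (Q n y ^ ((-(lam+β)-1)*((p-2)/2) + (-((lam+β)/2))) * (β^2 * Q n y + ((lam+β)^2 - 2*(lam+β)*β) * S n k y) ^ ((p-2)/2)))) • Pc n k y + ((-(lam+β)) * (S n k y ^ ((β-1)*((p-2)/2) + β/2) * (Q n y ^ ((-(lam+β)-1)*((p-2)/2) + (-((lam+β)/2) - 1)) * (β^2 * Q n y + ((lam+β)^2 - 2*(lam+β)*β) * S n k y) ^ ((p-2)/2)))) • y) x).toLinearMap = (β * (((β-1)*((p-2)/2) + (β/2 - 1)) * S n k x ^ (((β-1)*((p-2)/2) + (β/2 - 1)) - 1) * Q n x ^ ((-(lam+β)-1)*((p-2)/2) + (-((lam+β)/2))) * (β^2 * Q n x + ((lam+β)^2 - 2*(lam+β)*β) * S n k x) ^ ((p-2)/2) + S n k x ^ ((β-1)*((p-2)/2) + (β/2 - 1)) * Q n x ^ ((-(lam+β)-1)*((p-2)/2) + (-((lam+β)/2)))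 * (((p-2)/2) * (β^2 * Q n x + ((lam+β)^2 - 2*(lam+β)*β) * S n k x) ^ (((p-2)/2) - 1)) * ((lam+β)^2 - 2*(lam+β)*β))) * (2 * S n k x) + (β * (((-(lam+β)-1)*((p-2)/2) + (-((lam+β)/2))) * S n k x ^ ((β-1)*((p-2)/2) + (β/2 - 1)) * Q n x ^ (((-(lam+β)-1)*((p-2)/2) + (-((lam+β)/2))) - 1) * (β^2 * Q n x + ((lam+β)^2 - 2*(lam+β)*β) * S n k x) ^ ((p-2)/2) + S n k x ^ ((β-1)*((p-2)/2) + (β/2 - 1)) * Q n x ^ ((-(lam+β)-1)*((p-2)/2) + (-((lam+β)/2))) * (((p-2)/2) * (β^2 * Q n x + ((lam+β)^2 - 2*(lam+β)*β) * S n k x) ^ (((p-2)/2) - 1)) * β^2)) * (2 * S n k x) + (β * (S n k x ^ ((β-1)*((p-2)/2) + (β/2 - 1)) * (Q n x ^ ((-(lam+β)-1)*((p-2)/2) + (-((lam+β)/2))) * (β^2 * Q n x + ((lam+β)^2 - 2*(lam+β)*β) * S n k x) ^ ((p-2)/2)))) * ((n:ℝ) - (k:ℝ)) + ((-(lam+β))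 * (((β-1)*((p-2)/2) + β/2) * S n k x ^ (((β-1)*((p-2)/2) + β/2) - 1) * Q n x ^ ((-(lam+β)-1)*((p-2)/2) + (-((lam+β)/2) - 1)) * (β^2 * Q n x + ((lam+β)^2 - 2*(lam+β)*β) * S n k x) ^ ((p-2)/2) + S n k x ^ ((β-1)*((p-2)/2) + β/2) * Q n x ^ ((-(lam+β)-1)*((p-2)/2) + (-((lam+β)/2) - 1)) * (((p-2)/2) * (β^2 * Q n x + ((lam+β)^2 - 2*(lam+β)*β) * S n k x) ^ (((p-2)/2) - 1)) * ((lam+β)^2 - 2*(lam+β)*β))) * (2 * S n k x) + ((-(lam+β)) * (((-(lam+β)-1)*((p-2)/2) + (-((lam+β)/2) - 1)) * S n k x ^ ((β-1)*((p-2)/2) + β/2) * Q n x ^ (((-(lam+β)-1)*((p-2)/2) + (-((lam+β)/2) - 1)) - 1) * (β^2 * Q n x + ((lam+β)^2 - 2*(lam+β)*β) * S n k x) ^ ((p-2)/2) + S n k x ^ ((β-1)*((p-2)/2) + β/2) * Q n x ^ ((-(lam+β)-1)*((p-2)/2) + (-((lam+β)/2) - 1)) * (((p-2)/2) * (β^2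 * Q n x + ((lam+β)^2 - 2*(lam+β)*β) * S n k x) ^ (((p-2)/2) - 1)) * β^2)) * (2 * Q n x) + ((-(lam+β)) * (S n k x ^ ((β-1)*((p-2)/2) + β/2) * (Q n x ^ ((-(lam+β)-1)*((p-2)/2) + (-((lam+β)/2) - 1)) * (β^2 * Q n x + ((lam+β)^2 - 2*(lam+β)*β) * S n k x) ^ ((p-2)/2)))) * (n:ℝ) := by
    rw [hW.fderiv]
    simp only [ContinuousLinearMap.coe_add, ContinuousLinearMap.coe_smul, map_add, _root_.map_smul,
      trace_smulRight, trace_Pc hkln, trace_id', smul_eq_mul,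
      ContinuousLinearMap.add_apply, ContinuousLinearMap.coe_smul', Pi.smul_apply]
    rw [hDS_P, hDQ_P, hDS_x, hDQ_x]
    ring
  rw [pLap, vdiv, heq.fderiv_eq, htrace]
  clear hΨ hΧ hW heq htrace hu huhat hDS_P hDQ_P hDS_x hDQ_x hx hlam hlam1 hlam2 hβ
  have hsq : S n k x ≤ Q n x := S_le_Q x
  have hHx : 0 < β^2 * Q n x + ((lam+β)^2 - 2*(lam+β)*β) * S n k x := hHy x hSx
  set s := S n k x with hsd
  set q := Q n x with hqd
  -- normalize exponents
  rw [show ((β-1)*((p-2)/2) + β/2) - 1 = ((β-1)*((p-2)/2) + (β/2 - 1)) from by ring, show ((-(lam+β)-1)*((p-2)/2) + (-((lam+β)/2))) - 1 = ((-(lam+β)-1)*((p-2)/2) + (-((lam+β)/2) - 1)) from by ring]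
  -- split powers
  have spS2 : s ^ ((β-1)*((p-2)/2) + β/2) = s ^ ((β-1)*((p-2)/2) + (β/2 - 1)) * s := by
    have h := Real.rpow_add_one hSx.ne' ((β-1)*((p-2)/2) + (β/2 - 1))
    rw [show ((β-1)*((p-2)/2) + (β/2 - 1)) + 1 = ((β-1)*((p-2)/2) + β/2) from by ring] at h
    exact h
  have spS1 : s ^ ((β-1)*((p-2)/2) + (β/2 - 1)) = s ^ (((β-1)*((p-2)/2) + (β/2 - 1)) - 1) * s := by
    have h := Real.rpow_add_one hSx.ne' (((β-1)*((p-2)/2) + (β/2 - 1)) - 1)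
    rwa [sub_add_cancel] at h
  have spQ2 : q ^ ((-(lam+β)-1)*((p-2)/2) + (-((lam+β)/2))) = q ^ ((-(lam+β)-1)*((p-2)/2) + (-((lam+β)/2) - 1)) * q := by
    have h := Real.rpow_add_one hQx.ne' ((-(lam+β)-1)*((p-2)/2) + (-((lam+β)/2) - 1))
    rw [show ((-(lam+β)-1)*((p-2)/2) + (-((lam+β)/2) - 1)) + 1 = ((-(lam+β)-1)*((p-2)/2) + (-((lam+β)/2))) from by ring] at h
    exact h
  have spQ1 : q ^ ((-(lam+β)-1)*((p-2)/2) + (-((lam+β)/2) - 1)) = q ^ (((-(lam+β)-1)*((p-2)/2) + (-((lam+β)/2) - 1)) - 1) * q := by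
    have h := Real.rpow_add_one hQx.ne' (((-(lam+β)-1)*((p-2)/2) + (-((lam+β)/2) - 1)) - 1)
    rwa [sub_add_cancel] at h
  have spH : (β^2 * q + ((lam+β)^2 - 2*(lam+β)*β) * s) ^ ((p-2)/2)
      = (β^2 * q + ((lam+β)^2 - 2*(lam+β)*β) * s) ^ (((p-2)/2) - 1)
        * (β^2 * q + ((lam+β)^2 - 2*(lam+β)*β) * s) := by
    have h := Real.rpow_add_one hHx.ne' (((p-2)/2) - 1)
    rwa [sub_add_cancel] at h
  rw [spS2, spS1, spQ2, spQ1, spH]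
  have hnR : (n:ℝ) = p + k - β*(p-1) := by linarith
  rw [hnR]
  -- positivity of the power atoms
  have hsb : 0 < s ^ (((β-1)*((p-2)/2) + (β/2 - 1)) - 1) := Real.rpow_pos_of_pos hSx _
  have hqb : 0 < q ^ (((-(lam+β)-1)*((p-2)/2) + (-((lam+β)/2) - 1)) - 1) := Real.rpow_pos_of_pos hQx _
  have hhb : 0 < (β^2 * q + ((lam+β)^2 - 2*(lam+β)*β) * s) ^ (((p-2)/2) - 1) :=
    Real.rpow_pos_of_pos hHx _
  -- sign facts for the coefficients
  have hb1' : 0 ≤ β*((k:ℝ)+p-2) - lam*(β*(p-1)+p-2) := by nlinarith [hb1, hβ', hp1]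
  have hkm : 0 < (k:ℝ) - lam*(p-1) := by linarith
  have hC1 : (-(lam+β)*β*(β*((k:ℝ)+p-2) - lam*(β*(p-1)+p-2))) ≤ 0 := by
    nlinarith [mul_nonneg (mul_nonneg hα.le hβpos.le) hb1']
  have hC10 : (-(lam+β)*lam^2*((k:ℝ)-lam*(p-1))) ≤ 0 := by
    nlinarith [mul_nonneg (mul_nonneg hα.le (sq_nonneg lam)) hkm.le]
  have hT : (-(lam+β)*β*(β*((k:ℝ)+p-2) - lam*(β*(p-1)+p-2)))*(s^2*q^2) + ((-(lam+β)*lam^2*((k:ℝ)-lam*(p-1))) - (-(lam+β)*β*(β*((k:ℝ)+p-2) - lam*(β*(p-1)+p-2))))*(s^3*q) ≤ 0 := by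
    nlinarith [mul_nonneg (neg_nonneg.mpr hC1)
        (mul_nonneg (mul_nonneg (pow_nonneg hSx.le 2) hQx.le) (sub_nonneg.mpr hsq)),
      mul_nonneg (neg_nonneg.mpr hC10)
        (mul_nonneg (pow_nonneg hSx.le 3) hQx.le)]
  have key : s ^ (((β-1)*((p-2)/2) + (β/2 - 1)) - 1) * (q ^ (((-(lam+β)-1)*((p-2)/2) + (-((lam+β)/2) - 1)) - 1) *
      ((β^2 * q + ((lam+β)^2 - 2*(lam+β)*β) * s) ^ (((p-2)/2) - 1) *
        ((-(lam+β)*β*(β*((k:ℝ)+p-2) - lam*(β*(p-1)+p-2)))*(s^2*q^2) + ((-(lam+β)*lam^2*((k:ℝ)-lam*(p-1))) - (-(lam+β)*β*(β*((k:ℝ)+p-2) - lam*(β*(p-1)+p-2))))*(s^3*q)))) ≤ 0 := by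
    apply mul_nonpos_of_nonneg_of_nonpos hsb.le
    apply mul_nonpos_of_nonneg_of_nonpos hqb.le
    apply mul_nonpos_of_nonneg_of_nonpos hhb.le
    exact hT
  nlinarith [key]
end
end

section
/- Let k ≥ 1 be an integer. Let ψ : ℝᵏ → ℝ be Lipschitz with Lipschitz constant ≤ 1, |ψ| ≤ 1, 1-periodic in each coordinate, and ∫_{[0,1]ᵏ} ψ(x') dx' = 0. Let (T_j) be a sequence of positive integers with T_1 = 1 and T_j dividing T_{j+1} for all j. Then for all positive integers m < j: | ∫_{[0,1]ᵏ} ψ(T_m x') ψ(T_j x') dx' | ≤ √k · T_m / T_j. -/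
open Real MeasureTheory

noncomputable section

abbrev Ek (k : ℕ) := EuclideanSpace ℝ (Fin k)
def bE (k : ℕ) : Module.Basis (Fin k) ℝ (Ek k) := (EuclideanSpace.basisFun (Fin k) ℝ).toBasis
def DD (k : ℕ) : Set (Ek k) := ZSpan.fundamentalDomain (bE k)
def LL (k : ℕ) : AddSubgroup (Ek k) := (Submodule.span ℤ (Set.range ⇑(bE k))).toAddSubgroup

instance LL_countable {k : ℕ} : Countable (LL k) :=
  (inferInstance : Countable (Submodule.span ℤ (Set.range ⇑(bE k))))

lemma mem_DD {k : ℕ} {x : Ek k} : x ∈ DD k ↔ ∀ i, 0 ≤ x i ∧ x i < 1 := by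
  simp [DD, ZSpan.mem_fundamentalDomain, bE, Set.mem_Ico]

lemma DD_meas {k : ℕ} : MeasurableSet (DD k) := ZSpan.fundamentalDomain_measurableSet (bE k)

lemma fundDD {k : ℕ} : IsAddFundamentalDomain (LL k) (DD k) (volume : Measure (Ek k)) :=
  ZSpan.isAddFundamentalDomain' (bE k) _

lemma preim_pi {k : ℕ} (S : Fin k → Set ℝ) :
    (MeasurableEquiv.toLp 2 (Fin k → ℝ)).symm ⁻¹' (Set.pi Set.univ S) =
      {x : Ek k | ∀ i, x i ∈ S i} := by
  ext x; simp [MeasurableEquiv.coe_toLp_symm, Set.mem_pi]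

lemma volume_DD {k : ℕ} : (volume : Measure (Ek k)) (DD k) = 1 := by
  have h := (EuclideanSpace.volume_preserving_symm_measurableEquiv_toLp (Fin k)).measure_preimage
    (s := Set.pi Set.univ fun _ : Fin k => Set.Ico (0:ℝ) 1)
    ((MeasurableSet.univ_pi fun _ => measurableSet_Ico).nullMeasurableSet)
  rw [preim_pi] at h
  have h2 : {x : Ek k | ∀ i, x i ∈ Set.Ico (0:ℝ) 1} = DD k := by
    ext x; simp [mem_DD, Set.mem_Ico]
  rw [h2] at h
  rw [h, volume_pi_pi]
  simp

lemma hyperplane_null {k : ℕ} (i : Fin k) :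
    (volume : Measure (Ek k)) {x : Ek k | x i = 1} = 0 := by
  have h := (EuclideanSpace.volume_preserving_symm_measurableEquiv_toLp (Fin k)).measure_preimage
    (s := Set.pi Set.univ (Function.update (fun _ : Fin k => (Set.univ : Set ℝ)) i {1}))
    ((MeasurableSet.univ_pi fun j => by
        rcases eq_or_ne j i with rfl | hj
        · simp
        · simp [Function.update_of_ne hj]).nullMeasurableSet)
  rw [preim_pi] at h
  have h2 : {x : Ek k | ∀ j, x j ∈ Function.update (fun _ : Fin k => (Set.univ : Set ℝ)) i {1} j}
      = {x : Ek k | x i = 1} := by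
    ext x
    constructor
    · intro hx; have := hx i; simpa using this
    · intro hx j
      rcases eq_or_ne j i with rfl | hj
      · simpa using hx
      · simp [Function.update_of_ne hj]
  rw [h2] at h
  rw [h, volume_pi_pi]
  exact Finset.prod_eq_zero (Finset.mem_univ i) (by simp)

lemma cube_ae {k : ℕ} :
    {x : Ek k | ∀ i, 0 ≤ x i ∧ x i ≤ 1} =ᵐ[(volume : Measure (Ek k))] DD k := by
  rw [MeasureTheory.ae_eq_set]
  constructor
  · refine measure_mono_null (fun x hx => ?_) (measure_iUnion_null fun i => hyperplane_null i)
    obtain ⟨hC, hD⟩ := hx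
    rw [mem_DD] at hD
    push_neg at hD
    obtain ⟨i, hi⟩ := hD
    refine Set.mem_iUnion.2 ⟨i, ?_⟩
    have h1 := (hC i).1
    have h2 := (hC i).2
    have := hi h1
    show x i = 1
    linarith
  · have hsub : DD k ⊆ {x : Ek k | ∀ i, 0 ≤ x i ∧ x i ≤ 1} := fun x hx i =>
      ⟨(mem_DD.1 hx i).1, le_of_lt (mem_DD.1 hx i).2⟩
    rw [Set.diff_eq_empty.2 hsub]; simp

lemma per_lattice {k : ℕ} {ψ : Ek k → ℝ}
    (hper : ∀ i : Fin k, ∀ x, ψ (x + EuclideanSpace.single i 1) = ψ x) :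
    ∀ l ∈ LL k, ∀ x, ψ (x + l) = ψ x := by
  have hneg : ∀ l : Ek k, (∀ x, ψ (x + l) = ψ x) → ∀ x, ψ (x + (-l)) = ψ x := by
    intro l hl x
    have := hl (x + -l); rw [add_assoc, neg_add_cancel, add_zero] at this; exact this.symm
  intro l hl
  simp only [LL, Submodule.mem_toAddSubgroup] at hl
  induction hl using Submodule.span_induction with
  | mem y hy =>
    obtain ⟨i, rfl⟩ := hy
    intro x
    have : bE k i = EuclideanSpace.single i 1 := by
      rw [bE, OrthonormalBasis.coe_toBasis, EuclideanSpace.basisFun_apply]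
    rw [this]; exact hper i x
  | zero => intro x; simp
  | add y z _ _ hy hz => intro x; rw [← add_assoc, hz (x + y), hy x]
  | smul n y _ hy =>
    induction n using Int.induction_on with
    | zero => intro x; simp
    | succ m hm => intro x; rw [add_smul, one_smul, ← add_assoc, hy (x + (m:ℤ) • y), hm x]
    | pred m hm =>
      intro x
      rw [sub_smul, one_smul, sub_eq_add_neg, ← add_assoc, hneg y hy (x + (-(m:ℤ)) • y)]
      exact hm x

lemma fundDD_translate {k : ℕ} (v : Ek k) :
    IsAddFundamentalDomain (LL k) ((· + v) '' (DD k)) (volume : Measure (Ek k)) := by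
  refine fundDD.image_of_equiv (Equiv.addRight v) ?_ (Equiv.refl _) ?_
  · have : MeasurePreserving (Equiv.addRight v).symm (volume : Measure (Ek k)) volume := by
      simpa using measurePreserving_add_right (volume : Measure (Ek k)) (-v)
    exact this.quasiMeasurePreserving
  · intro l x
    show (l : Ek k) + x + v = l + (x + v)
    abel

lemma integral_DD_translate {k : ℕ} {f : Ek k → ℝ}
    (hf : ∀ l ∈ LL k, ∀ x, f (x + l) = f x) (v : Ek k) :
    ∫ x in DD k, f (x + v) = ∫ x in DD k, f x := by
  have h1 : ∫ x in DD k, f (x + v) = ∫ y in (· + v) '' (DD k), f y :=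
    ((measurePreserving_add_right (volume : Measure (Ek k)) v).setIntegral_image_emb
      (measurableEmbedding_addRight v) f (DD k)).symm
  rw [h1]
  exact (fundDD_translate v).setIntegral_eq fundDD
    (fun l x => by show f ((l : Ek k) + x) = f x; rw [add_comm]; exact hf l l.2 x)

lemma norm_le_sqrt_of_mem_DD {k : ℕ} {s : Ek k} (hs : s ∈ DD k) : ‖s‖ ≤ Real.sqrt k := by
  rw [EuclideanSpace.norm_eq]
  refine Real.sqrt_le_sqrt ?_
  have : ∀ i : Fin k, ‖s i‖ ^ 2 ≤ 1 := by
    intro i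
    obtain ⟨h0, h1⟩ := mem_DD.1 hs i
    have : ‖s i‖ ≤ 1 := by rw [Real.norm_eq_abs, abs_of_nonneg h0]; exact le_of_lt h1
    nlinarith [norm_nonneg (s i)]
  calc (∑ i, ‖s i‖ ^ 2) ≤ ∑ _i : Fin k, (1:ℝ) := Finset.sum_le_sum fun i _ => this i
  _ = k := by simp

/-- the almost-orthogonality estimate
`|∫_{[0,1]ᵏ} ψ(T_m x') ψ(T_j x') dx'| ≤ √k · T_m / T_j` for `1 ≤ m < j`. -/
theorem stmt16 (k : ℕ) (hk : 1 ≤ k)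
    (ψ : EuclideanSpace ℝ (Fin k) → ℝ)
    (hLip : ∀ x y, |ψ x - ψ y| ≤ ‖x - y‖)
    (hbd : ∀ x, |ψ x| ≤ 1)
    (hper : ∀ i : Fin k, ∀ x, ψ (x + EuclideanSpace.single i 1) = ψ x)
    (hmean : (∫ x in {x : EuclideanSpace ℝ (Fin k) | ∀ i, 0 ≤ x i ∧ x i ≤ 1}, ψ x) = 0)
    (T : ℕ → ℕ) (hT1 : T 1 = 1)
    (hTpos : ∀ j, 1 ≤ j → 0 < T j)
    (hTdvd : ∀ j, 1 ≤ j → T j ∣ T (j + 1)) :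
    ∀ m j : ℕ, 1 ≤ m → m < j →
      |∫ x in {x : EuclideanSpace ℝ (Fin k) | ∀ i, 0 ≤ x i ∧ x i ≤ 1},
          ψ ((T m : ℝ) • x) * ψ ((T j : ℝ) • x)| ≤
        Real.sqrt k * (T m : ℝ) / (T j : ℝ) := by
  intro m j hm hmj
  set a : ℝ := (T m : ℝ) with ha_def
  set c : ℝ := (T j : ℝ) with hc_def
  have ha : 0 < a := by rw [ha_def]; exact_mod_cast hTpos m hm
  have hc : 0 < c := by rw [hc_def]; exact_mod_cast hTpos j (hm.trans hmj.le)
  set r : ℝ := a / c with hr_def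
  have hr : 0 ≤ r := div_nonneg ha.le hc.le
  -- basic analytic facts
  have hψc : Continuous ψ := by
    refine LipschitzWith.continuous (K := 1) ?_
    refine LipschitzWith.of_dist_le_mul fun x y => ?_
    simp only [Real.dist_eq, dist_eq_norm, NNReal.coe_one, one_mul]
    exact hLip x y
  haveI : IsFiniteMeasure ((volume : Measure (Ek k)).restrict (DD k)) :=
    ⟨by rw [Measure.restrict_apply_univ, volume_DD]; exact ENNReal.one_lt_top⟩
  have hvol1 : (volume : Measure (Ek k)).real (DD k) = 1 := by rw [measureReal_def, volume_DD]; simp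
  -- integrability helper
  have hint : ∀ f : Ek k → ℝ, Continuous f → (∀ x, |f x| ≤ 1) →
      IntegrableOn f (DD k) (volume : Measure (Ek k)) := by
    intro f hf hb
    refine Measure.integrableOn_of_bounded (M := 1) (by rw [volume_DD]; exact ENNReal.one_ne_top)
      hf.aestronglyMeasurable ?_
    exact ae_of_all _ fun x => by rw [Real.norm_eq_abs]; exact hb x
  -- lattice periodicity
  have hperL : ∀ l ∈ LL k, ∀ x, ψ (x + l) = ψ x := per_lattice hper
  have hper_smul : ∀ n : ℕ, ∀ l ∈ LL k, ∀ z, ψ (z + (n : ℝ) • l) = ψ z := by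
    intro n l hl z
    have h1 : ((n : ℝ)) • l = ((n : ℤ) : ℝ) • l := by norm_num
    have h2 : ((n : ℤ) : ℝ) • l = ((n : ℤ)) • l := Int.cast_smul_eq_zsmul ℝ _ l
    rw [h1, h2]
    exact hperL _ (AddSubgroup.zsmul_mem _ hl _) z
  -- mean zero over DD
  have hmeanD : (∫ x in DD k, ψ x) = 0 := by
    rw [← setIntegral_congr_set cube_ae]; exact hmean
  -- the averaged function
  set g : Ek k → ℝ := fun s => ∫ y in DD k, ψ (a • y) * ψ (c • y + s) with hg_def
  -- step A
  have stepA : ∀ s : Ek k,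
      (∫ x in DD k, ψ (a • x - r • s) * ψ (c • x)) = g s := by
    intro s
    set F : Ek k → ℝ := fun y => ψ (a • y) * ψ (c • y + s) with hF_def
    have hFper : ∀ l ∈ LL k, ∀ x, F (x + l) = F x := by
      intro l hl x
      have h1 : a • (x + l) = a • x + (T m : ℝ) • l := by rw [smul_add]
      have h2 : c • (x + l) + s = (c • x + s) + (T j : ℝ) • l := by rw [smul_add]; abel
      simp only [F, h1, h2, hper_smul (T m) l hl, hper_smul (T j) l hl]
    have hpoint : ∀ x, ψ (a • x - r • s) * ψ (c • x) = F (x + (-(c⁻¹ • s))) := by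
      intro x
      have e1 : a • (x + -(c⁻¹ • s)) = a • x - r • s := by
        rw [smul_add, smul_neg, smul_smul, hr_def, div_eq_mul_inv, sub_eq_add_neg]
      have e2 : c • (x + -(c⁻¹ • s)) + s = c • x := by
        rw [smul_add, smul_neg, smul_smul, mul_inv_cancel₀ hc.ne', one_smul]
        abel
      simp only [F, e1, e2]
    calc (∫ x in DD k, ψ (a • x - r • s) * ψ (c • x))
        = ∫ x in DD k, F (x + (-(c⁻¹ • s))) := by
          exact setIntegral_congr_fun DD_meas fun x _ => hpoint x
      _ = ∫ x in DD k, F x := integral_DD_translate hFper _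
      _ = g s := rfl
  -- integrability of the product function
  have hcont2 : Continuous fun p : Ek k × Ek k => ψ (a • p.2) * ψ (c • p.2 + p.1) := by
    exact (hψc.comp (continuous_snd.const_smul a)).mul
      (hψc.comp ((continuous_snd.const_smul c).add continuous_fst))
  have hprod : Integrable (Function.uncurry fun s y : Ek k => ψ (a • y) * ψ (c • y + s))
      (((volume : Measure (Ek k)).restrict (DD k)).prod
        ((volume : Measure (Ek k)).restrict (DD k))) := by
    refine Integrable.mono' (integrable_const 1) hcont2.aestronglyMeasurable ?_
    refine ae_of_all _ fun p => ?_
    obtain ⟨s, y⟩ := p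
    show ‖ψ (a • y) * ψ (c • y + s)‖ ≤ 1
    rw [Real.norm_eq_abs, abs_mul]
    exact mul_le_one₀ (hbd _) (abs_nonneg _) (hbd _)
  -- step B : average of g is zero
  have hg_int : IntegrableOn g (DD k) (volume : Measure (Ek k)) := by
    have := hprod.integral_prod_left
    exact this
  have stepB : (∫ s in DD k, g s) = 0 := by
    have hswap := integral_integral_swap hprod
    have hinner : ∀ y : Ek k, (∫ s in DD k, ψ (a • y) * ψ (c • y + s)) = 0 := by
      intro y
      have h1 : ∀ s : Ek k, ψ (c • y + s) = ψ (s + c • y) := fun s => by rw [add_comm]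
      simp only [h1]
      rw [integral_const_mul, integral_DD_translate hperL (c • y), hmeanD, mul_zero]
    calc (∫ s in DD k, g s)
        = ∫ y in DD k, ∫ s in DD k, ψ (a • y) * ψ (c • y + s) := hswap
      _ = ∫ y in DD k, (0:ℝ) := by
          exact setIntegral_congr_fun DD_meas fun y _ => hinner y
      _ = 0 := by simp
  -- integrability of the two specific integrands
  have int0 : IntegrableOn (fun x => ψ (a • x) * ψ (c • x)) (DD k) volume := by
    refine hint _ ((hψc.comp (continuous_id.const_smul a)).mul
      (hψc.comp (continuous_id.const_smul c))) fun x => ?_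
    rw [abs_mul]; exact mul_le_one₀ (hbd _) (abs_nonneg _) (hbd _)
  have ints : ∀ s : Ek k, IntegrableOn (fun x => ψ (a • x - r • s) * ψ (c • x)) (DD k) volume := by
    intro s
    refine hint _ ((hψc.comp ((continuous_id.const_smul a).sub continuous_const)).mul
      (hψc.comp (continuous_id.const_smul c))) fun x => ?_
    rw [abs_mul]; exact mul_le_one₀ (hbd _) (abs_nonneg _) (hbd _)
  -- identify the target integral
  have hI : (∫ x in {x : EuclideanSpace ℝ (Fin k) | ∀ i, 0 ≤ x i ∧ x i ≤ 1},
      ψ ((T m : ℝ) • x) * ψ ((T j : ℝ) • x)) = g 0 := by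
    rw [setIntegral_congr_set cube_ae, ← stepA 0]
    refine setIntegral_congr_fun DD_meas fun x _ => ?_
    rw [smul_zero, sub_zero]
  -- pointwise bound |g 0 - g s| ≤ √k * r on DD
  have hbound : ∀ s ∈ DD k, |g 0 - g s| ≤ Real.sqrt k * r := by
    intro s hs
    have hg0 : g 0 = ∫ x in DD k, ψ (a • x) * ψ (c • x) := by
      rw [← stepA 0]
      refine setIntegral_congr_fun DD_meas fun x _ => ?_
      rw [smul_zero, sub_zero]
    have hgs : g s = ∫ x in DD k, ψ (a • x - r • s) * ψ (c • x) := (stepA s).symm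
    rw [hg0, hgs, ← integral_sub int0 (ints s)]
    have hpt : ∀ x, |ψ (a • x) * ψ (c • x) - ψ (a • x - r • s) * ψ (c • x)|
        ≤ Real.sqrt k * r := by
      intro x
      rw [← sub_mul, abs_mul]
      have h1 : |ψ (a • x) - ψ (a • x - r • s)| ≤ r * ‖s‖ := by
        have := hLip (a • x) (a • x - r • s)
        have he : a • x - (a • x - r • s) = r • s := by abel
        rw [he] at this
        rw [norm_smul, Real.norm_eq_abs, abs_of_nonneg hr] at this
        exact this
      have h2 : r * ‖s‖ ≤ r * Real.sqrt k := by
        exact mul_le_mul_of_nonneg_left (norm_le_sqrt_of_mem_DD hs) hr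
      calc |ψ (a • x) - ψ (a • x - r • s)| * |ψ (c • x)|
          ≤ (r * Real.sqrt k) * 1 := by
            refine mul_le_mul (h1.trans h2) (hbd _) (abs_nonneg _) ?_
            positivity
        _ = Real.sqrt k * r := by ring
    calc |∫ x in DD k, (ψ (a • x) * ψ (c • x) - ψ (a • x - r • s) * ψ (c • x))|
        ≤ ∫ x in DD k, |ψ (a • x) * ψ (c • x) - ψ (a • x - r • s) * ψ (c • x)| := by
          simpa [Real.norm_eq_abs] using
            norm_integral_le_integral_norm (μ := volume.restrict (DD k))
              (f := fun x => ψ (a • x) * ψ (c • x) - ψ (a • x - r • s) * ψ (c • x))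
      _ ≤ ∫ _x in DD k, Real.sqrt k * r := by
          refine setIntegral_mono_on ((int0.sub (ints s)).abs) (integrableOn_const ?_)
            DD_meas fun x _ => hpt x
          rw [volume_DD]; exact ENNReal.one_ne_top
      _ = Real.sqrt k * r := by rw [setIntegral_const, hvol1, smul_eq_mul, one_mul]
  -- conclude
  have hgood : g 0 = ∫ s in DD k, (g 0 - g s) := by
    rw [integral_sub (integrableOn_const (C := g 0) (by rw [volume_DD]; exact ENNReal.one_ne_top))
      hg_int, stepB, sub_zero, setIntegral_const, hvol1, smul_eq_mul, one_mul]
  rw [hI]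
  calc |g 0| = |∫ s in DD k, (g 0 - g s)| := by rw [← hgood]
    _ ≤ ∫ s in DD k, |g 0 - g s| := by
        simpa [Real.norm_eq_abs] using
          norm_integral_le_integral_norm (μ := volume.restrict (DD k))
            (f := fun s => g 0 - g s)
    _ ≤ ∫ _s in DD k, Real.sqrt k * r := by
        refine setIntegral_mono_on ?_ (integrableOn_const ?_) DD_meas fun s hsmem => hbound s hsmem
        · exact ((integrableOn_const (by rw [volume_DD]; exact ENNReal.one_ne_top)).sub
            hg_int).abs
        · rw [volume_DD]; exact ENNReal.one_ne_top
    _ = Real.sqrt k * r := by rw [setIntegral_const, hvol1, smul_eq_mul, one_mul]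
    _ = Real.sqrt k * a / c := by rw [hr_def, mul_div_assoc]
end
end
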